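/- Let f : ℝ^n → ℝ be L-smooth and μ-strongly convex, r proper closed convex, x* the minimizer of f + r, and for 0 < η ≤ 1/L define d' = (prox_r^η(x − η∇f(x)) − x)/η. Then μ‖x − x*‖ ≤ 2‖d'‖. -/

import Mathlib

open Set InnerProductSpace RealInnerProductSpace

section Helpers

variable {E : Type*} [NormedAddCommGroup E] [InnerProductSpace ℝ E] [CompleteSpace E]

lemma my_fderiv_eq_toDual_gradient (f : E → ℝ) (u : E) :
    fderiv ℝ f u = InnerProductSpace.toDual ℝ E (gradient f u) := by
  simp [gradient, LinearIsometryEquiv.apply_symm_apply]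

lemma my_taylor_bound (f : E → ℝ) (hdiff : Differentiable ℝ f) (M : ℝ) (hM : 0 ≤ M)
    (hLip : ∀ x y, ‖gradient f x - gradient f y‖ ≤ M * ‖x - y‖) (x y : E) :
    |f y - f x - ⟪gradient f x, y - x⟫_ℝ| ≤ M * ‖y - x‖ ^ 2 := by
  have hs : Convex ℝ (segment ℝ x y) := convex_segment x y
  have key : ‖f y - f x - (InnerProductSpace.toDual ℝ E (gradient f x)) (y - x)‖
      ≤ (M * ‖y - x‖) * ‖y - x‖ := by
    apply hs.norm_image_sub_le_of_norm_hasFDerivWithin_le'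
      (f' := fun u => fderiv ℝ f u) (φ := InnerProductSpace.toDual ℝ E (gradient f x))
    · intro u _
      exact (hdiff u).hasFDerivAt.hasFDerivWithinAt
    · intro u hu
      simp only [my_fderiv_eq_toDual_gradient f u]
      rw [← map_sub, LinearIsometryEquiv.norm_map]
      rw [segment_eq_image'] at hu
      obtain ⟨t, ht, rfl⟩ := hu
      calc ‖gradient f (x + t • (y - x)) - gradient f x‖
          ≤ M * ‖x + t • (y - x) - x‖ := hLip _ _
        _ = M * (t * ‖y - x‖) := by
            rw [add_sub_cancel_left, norm_smul, Real.norm_eq_abs, abs_of_nonneg ht.1]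
        _ ≤ M * ‖y - x‖ := by
            nlinarith [mul_nonneg (mul_nonneg hM (sub_nonneg.2 ht.2)) (norm_nonneg (y - x))]
    · exact left_mem_segment ℝ x y
    · exact right_mem_segment ℝ x y
  rw [InnerProductSpace.toDual_apply_apply] at key
  calc |f y - f x - ⟪gradient f x, y - x⟫_ℝ| ≤ (M * ‖y - x‖) * ‖y - x‖ := key
    _ = M * ‖y - x‖ ^ 2 := by ring

lemma my_eps_trick {a b C : ℝ} (hC : 0 ≤ C)
    (h : ∀ t : ℝ, 0 < t → t ≤ 1 → a ≤ b + C * t) : a ≤ b := by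
  by_contra hab
  push_neg at hab
  rcases eq_or_lt_of_le hC with hC0 | hC0
  · have := h 1 one_pos le_rfl
    rw [← hC0] at this
    linarith
  · have ht0 : 0 < min 1 ((a - b) / (2 * C)) := lt_min one_pos (div_pos (by linarith) (by linarith))
    have h1 := h _ ht0 (min_le_left _ _)
    have h2 : C * min 1 ((a - b) / (2 * C)) ≤ C * ((a - b) / (2 * C)) :=
      mul_le_mul_of_nonneg_left (min_le_right _ _) hC
    have h3 : C * ((a - b) / (2 * C)) = (a - b) / 2 := by
      field_simp
    linarith

lemma my_first_order (h : E → ℝ) (hdiff : Differentiable ℝ h)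
    (hconv : ConvexOn ℝ Set.univ h) (M : ℝ) (hM : 0 ≤ M)
    (hLip : ∀ x y, ‖gradient h x - gradient h y‖ ≤ M * ‖x - y‖) (x y : E) :
    h x + ⟪gradient h x, y - x⟫_ℝ ≤ h y := by
  apply my_eps_trick (C := M * ‖y - x‖ ^ 2) (by positivity)
  intro t ht0 ht1
  have hseg : x + t • (y - x) = (1 - t) • x + t • y := by module
  have hcv := hconv.2 (Set.mem_univ x) (Set.mem_univ y)
    (by linarith : (0:ℝ) ≤ 1 - t) ht0.le (by ring)
  rw [← hseg] at hcv
  simp only [smul_eq_mul] at hcv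
  have htay := my_taylor_bound h hdiff M hM hLip x (x + t • (y - x))
  rw [add_sub_cancel_left, real_inner_smul_right] at htay
  have hn : ‖t • (y - x)‖ ^ 2 = t ^ 2 * ‖y - x‖ ^ 2 := by
    rw [norm_smul, mul_pow, Real.norm_eq_abs, sq_abs]
  rw [hn] at htay
  have habs := (abs_le.mp htay).1
  have key : t * (h x + ⟪gradient h x, y - x⟫_ℝ)
      ≤ t * (h y + M * ‖y - x‖ ^ 2 * t) := by nlinarith [habs, hcv]
  exact le_of_mul_le_mul_left key ht0

lemma my_gradient_sub_sq (f : E → ℝ) (hdiff : Differentiable ℝ f) (c : ℝ) (z : E) :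
    HasGradientAt (fun w => f w - c / 2 * ‖w‖ ^ 2) (gradient f z - c • z) z := by
  rw [hasGradientAt_iff_hasFDerivAt]
  have h1 : HasFDerivAt f (InnerProductSpace.toDual ℝ E (gradient f z)) z := by
    have := (hdiff z).hasGradientAt
    rwa [hasGradientAt_iff_hasFDerivAt] at this
  have h2 : HasFDerivAt (fun w : E => c / 2 * ‖w‖ ^ 2) ((c / 2) • (2 • (innerSL ℝ z))) z :=
    (hasStrictFDerivAt_norm_sq z).hasFDerivAt.const_mul (c / 2)
  refine (h1.sub h2).congr_fderiv ?_
  ext v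
  simp only [InnerProductSpace.toDual_apply_apply, inner_sub_left, real_inner_smul_left,
    ContinuousLinearMap.sub_apply, ContinuousLinearMap.smul_apply, innerSL_apply_apply,
    smul_eq_mul]
  ring

end Helpers

set_option maxHeartbeats 1000000 in
theorem stmt8 {n : ℕ} (f : EuclideanSpace ℝ (Fin n) → ℝ)
    (hdiff : Differentiable ℝ f)
    (L μ : ℝ) (hL : 0 < L) (hμ : 0 < μ)
    (hLip : ∀ x y, ‖gradient f x - gradient f y‖ ≤ L * ‖x - y‖)
    (hsc : ConvexOn ℝ Set.univ (fun z => f z - μ / 2 * ‖z‖ ^ 2))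
    (r : EuclideanSpace ℝ (Fin n) → ℝ)
    (hr : ConvexOn ℝ Set.univ r) (hrlsc : LowerSemicontinuous r)
    (η : ℝ) (hη : 0 < η) (hηL : η ≤ 1 / L)
    (p : EuclideanSpace ℝ (Fin n) → EuclideanSpace ℝ (Fin n))
    (hp : ∀ y z, 1 / 2 * ‖p y - y‖ ^ 2 + η * r (p y) ≤ 1 / 2 * ‖z - y‖ ^ 2 + η * r z)
    (xs : EuclideanSpace ℝ (Fin n)) (hxs : ∀ z, f xs + r xs ≤ f z + r z)
    (x d' : EuclideanSpace ℝ (Fin n))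
    (hd' : d' = η⁻¹ • (p (x - η • gradient f x) - x)) :
    μ * ‖x - xs‖ ≤ 2 * ‖d'‖ := by
  set g := gradient f with hg
  set y₀ := x - η • g x with hy0
  set q := p y₀ with hq
  have hηne : η ≠ 0 := ne_of_gt hη
  have hqx : q - x = η • d' := by
    rw [hd', smul_smul, mul_inv_cancel₀ hηne, one_smul]
  have hL' : η * L ≤ 1 := by
    rw [le_div_iff₀ hL] at hηL
    exact hηL
  -- prox variational inequality
  have hVI : η * (r q - r xs) ≤ ⟪q - y₀, xs - q⟫_ℝ := by
    apply my_eps_trick (C := ‖xs - q‖ ^ 2 / 2) (by positivity)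
    intro t ht0 ht1
    have hseg : q + t • (xs - q) = (1 - t) • q + t • xs := by module
    have hcv := hr.2 (Set.mem_univ q) (Set.mem_univ xs)
      (by linarith : (0:ℝ) ≤ 1 - t) ht0.le (by ring)
    rw [← hseg] at hcv
    simp only [smul_eq_mul] at hcv
    have hp' := hp y₀ (q + t • (xs - q))
    rw [← hq] at hp'
    have hexp : ‖q + t • (xs - q) - y₀‖ ^ 2
        = ‖q - y₀‖ ^ 2 + 2 * t * ⟪q - y₀, xs - q⟫_ℝ + t ^ 2 * ‖xs - q‖ ^ 2 := by
      have e : q + t • (xs - q) - y₀ = (q - y₀) + t • (xs - q) := by abel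
      rw [e, norm_add_sq_real, real_inner_smul_right, norm_smul, Real.norm_eq_abs,
        mul_pow, sq_abs]
      ring
    rw [hexp] at hp'
    have hrr := mul_le_mul_of_nonneg_left hcv hη.le
    have key : t * (η * (r q - r xs))
        ≤ t * (⟪q - y₀, xs - q⟫_ℝ + ‖xs - q‖ ^ 2 / 2 * t) := by nlinarith [hp', hrr]
    exact le_of_mul_le_mul_left key ht0
  -- optimality of xs
  have hOPT : -⟪g xs, q - xs⟫_ℝ ≤ r q - r xs := by
    apply my_eps_trick (C := L * ‖q - xs‖ ^ 2) (by positivity)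
    intro t ht0 ht1
    have hseg : xs + t • (q - xs) = (1 - t) • xs + t • q := by module
    have hcv := hr.2 (Set.mem_univ xs) (Set.mem_univ q)
      (by linarith : (0:ℝ) ≤ 1 - t) ht0.le (by ring)
    rw [← hseg] at hcv
    simp only [smul_eq_mul] at hcv
    have hxst := hxs (xs + t • (q - xs))
    have htay := my_taylor_bound f hdiff L hL.le hLip xs (xs + t • (q - xs))
    rw [add_sub_cancel_left, real_inner_smul_right] at htay
    have hn : ‖t • (q - xs)‖ ^ 2 = t ^ 2 * ‖q - xs‖ ^ 2 := by
      rw [norm_smul, mul_pow, Real.norm_eq_abs, sq_abs]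
    rw [hn] at htay
    have habs := (abs_le.mp htay).2
    have key : t * (-⟪g xs, q - xs⟫_ℝ)
        ≤ t * ((r q - r xs) + L * ‖q - xs‖ ^ 2 * t) := by nlinarith [habs, hcv, hxst]
    exact le_of_mul_le_mul_left key ht0
  -- strong convexity: gradient monotone
  have hgradh : ∀ z, gradient (fun w => f w - μ / 2 * ‖w‖ ^ 2) z = g z - μ • z :=
    fun z => (my_gradient_sub_sq f hdiff μ z).gradient
  have hdiffh : Differentiable ℝ (fun w => f w - μ / 2 * ‖w‖ ^ 2) :=
    fun z => (my_gradient_sub_sq f hdiff μ z).differentiableAt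
  have hLiph : ∀ a b, ‖gradient (fun w => f w - μ / 2 * ‖w‖ ^ 2) a
      - gradient (fun w => f w - μ / 2 * ‖w‖ ^ 2) b‖ ≤ (L + μ) * ‖a - b‖ := by
    intro a b
    rw [hgradh, hgradh]
    have e : (g a - μ • a) - (g b - μ • b) = (g a - g b) - μ • (a - b) := by module
    rw [e]
    calc ‖(g a - g b) - μ • (a - b)‖ ≤ ‖g a - g b‖ + ‖μ • (a - b)‖ := norm_sub_le _ _
      _ ≤ L * ‖a - b‖ + μ * ‖a - b‖ := by
          rw [norm_smul, Real.norm_eq_abs, abs_of_pos hμ]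
          exact add_le_add (hLip a b) le_rfl
      _ = (L + μ) * ‖a - b‖ := by ring
  have h1 := my_first_order _ hdiffh hsc (L + μ) (by positivity) hLiph x xs
  have h2 := my_first_order _ hdiffh hsc (L + μ) (by positivity) hLiph xs x
  rw [hgradh] at h1 h2
  rw [inner_sub_left, real_inner_smul_left] at h1 h2
  have hmono : μ * ‖x - xs‖ ^ 2 ≤ ⟪g x - g xs, x - xs⟫_ℝ := by
    have e3 : ⟪g x - g xs, x - xs⟫_ℝ = ⟪g x, x - xs⟫_ℝ - ⟪g xs, x - xs⟫_ℝ := by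
      rw [inner_sub_left]
    have e4 : ⟪g x, xs - x⟫_ℝ = -⟪g x, x - xs⟫_ℝ := by
      rw [← inner_neg_right]; congr 1; abel
    have e5 : ⟪x, xs - x⟫_ℝ = ⟪x, xs⟫_ℝ - ⟪x, x⟫_ℝ := by rw [inner_sub_right]
    have e6 : ⟪xs, x - xs⟫_ℝ = ⟪xs, x⟫_ℝ - ⟪xs, xs⟫_ℝ := by rw [inner_sub_right]
    have e7 : ⟪x - xs, x - xs⟫_ℝ = ⟪x, x⟫_ℝ - ⟪x, xs⟫_ℝ - ⟪xs, x⟫_ℝ + ⟪xs, xs⟫_ℝ := by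
      rw [inner_sub_left, inner_sub_right, inner_sub_right]; ring
    have e8 : ‖x - xs‖ ^ 2 = ⟪x - xs, x - xs⟫_ℝ := (real_inner_self_eq_norm_sq _).symm
    have hsum : ⟪x, xs - x⟫_ℝ + ⟪xs, x - xs⟫_ℝ = -‖x - xs‖ ^ 2 := by
      rw [e5, e6, e8, e7, real_inner_comm x xs]; ring
    have hsum2 : ⟪g x, xs - x⟫_ℝ + ⟪g xs, x - xs⟫_ℝ = -⟪g x - g xs, x - xs⟫_ℝ := by
      rw [e3, e4]; ring
    have hμsum : μ * (⟪x, xs - x⟫_ℝ + ⟪xs, x - xs⟫_ℝ) = μ * (-‖x - xs‖ ^ 2) := by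
      rw [hsum]
    nlinarith [h1, h2, hsum2, hμsum]
  -- combine
  have e1 : q - y₀ = η • d' + η • g x := by
    rw [hy0, ← hqx]; abel
  have e2 : xs - q = -((x - xs) + η • d') := by
    rw [← hqx]; abel
  have e3 : q - xs = (x - xs) + η • d' := by
    rw [← hqx]; abel
  have hcomb : ⟪d' + (g x - g xs), (x - xs) + η • d'⟫_ℝ ≤ 0 := by
    have hVIO : η * (-⟪g xs, q - xs⟫_ℝ) ≤ ⟪q - y₀, xs - q⟫_ℝ := by
      have := mul_le_mul_of_nonneg_left hOPT hη.le
      linarith [hVI, this]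
    rw [e1, e2, e3] at hVIO
    simp only [inner_neg_right, inner_add_left, real_inner_smul_left] at hVIO
    have hexp : ⟪d' + (g x - g xs), (x - xs) + η • d'⟫_ℝ
        = ⟪d', (x - xs) + η • d'⟫_ℝ + ⟪g x, (x - xs) + η • d'⟫_ℝ
          - ⟪g xs, (x - xs) + η • d'⟫_ℝ := by
      rw [inner_add_left, inner_sub_left]; ring
    rw [hexp]
    nlinarith [hVIO, hη]
  have hGx : ‖g x - g xs‖ ≤ L * ‖x - xs‖ := hLip x xs
  have c1 : η * ‖g x - g xs‖ ≤ ‖x - xs‖ := by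
    nlinarith [hGx, hL', hη.le, norm_nonneg (x - xs)]
  have c2 : -⟪g x - g xs, d'⟫_ℝ ≤ ‖g x - g xs‖ * ‖d'‖ := by
    have := abs_real_inner_le_norm (g x - g xs) d'
    linarith [neg_abs_le (⟪g x - g xs, d'⟫_ℝ)]
  have b1 : -⟪d', x - xs⟫_ℝ ≤ ‖d'‖ * ‖x - xs‖ := by
    have := abs_real_inner_le_norm d' (x - xs)
    linarith [neg_abs_le (⟪d', x - xs⟫_ℝ)]
  have b2 : -(η * ⟪g x - g xs, d'⟫_ℝ) ≤ ‖x - xs‖ * ‖d'‖ := by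
    nlinarith [c1, c2, hη.le, norm_nonneg d', norm_nonneg (g x - g xs)]
  have hexp2 : ⟪d' + (g x - g xs), (x - xs) + η • d'⟫_ℝ
      = ⟪d', x - xs⟫_ℝ + η * ‖d'‖ ^ 2 + ⟪g x - g xs, x - xs⟫_ℝ
        + η * ⟪g x - g xs, d'⟫_ℝ := by
    rw [inner_add_left, inner_add_right, inner_add_right, real_inner_smul_right,
      real_inner_smul_right, real_inner_self_eq_norm_sq]
    ring
  rw [hexp2] at hcomb
  have hfin : μ * ‖x - xs‖ ^ 2 ≤ 2 * ‖d'‖ * ‖x - xs‖ := by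
    nlinarith [hmono, hcomb, b1, b2, hη.le, norm_nonneg d', sq_nonneg ‖d'‖,
      mul_nonneg hη.le (sq_nonneg ‖d'‖)]
  rcases eq_or_lt_of_le (norm_nonneg (x - xs)) with h0 | h0
  · rw [← h0, mul_zero]
    positivity
  · have : μ * ‖x - xs‖ * ‖x - xs‖ ≤ (2 * ‖d'‖) * ‖x - xs‖ := by nlinarith [hfin]
    exact le_of_mul_le_mul_right this h0
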